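/- arXiv:1511.08015 — 2 statements merged into one kernel-verified Lean document; each statement's English description precedes it below -/
import Mathlib

section
/- Let $h \in C^2(\mathbb{R})$, and let $G : \mathbb{R} \to \mathbb{R}$ be sublinear and monotone with $G(\alpha) = \frac{1}{2}(\overline{\sigma}^2 \alpha^+ - \underline{\sigma}^2 \alpha^-)$, $\overline{\sigma} \ge \underline{\sigma} > 0$. Suppose $g = f = 0$ (the trivial generators). Then the G-convexity inequality $2G(\tfrac{1}{2}h''(y)z^2 + \tfrac{1}{2}h'(y)A) \ge 2 h'(y) G(\tfrac{1}{2}A)$ for all $y, z, A \in \mathbb{R}$ holds if and only if $h$ is convex (i.e., $h'' \ge 0$) and for all $y, A$: $G(h'(y) A) \ge h'(y) G(A)$. -/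
/-- With trivial generators `g = f = 0`, the G-convexity inequality
`2G(½h''(y)z² + ½h'(y)A) ≥ 2h'(y)G(½A)` holds for all `y, z, A` iff `h` is convex
(`h'' ≥ 0`) and `G(h'(y)A) ≥ h'(y)G(A)` for all `y, A`. -/
theorem G_convexity_trivial_generators_iff
    (h : ℝ → ℝ) (hh : ContDiff ℝ 2 h)
    (σbar σund : ℝ) (h1 : σbar ≥ σund) (h2 : σund > 0)
    (G : ℝ → ℝ)
    (hG : ∀ α : ℝ, G α = (1/2) * (σbar^2 * max α 0 - σund^2 * max (-α) 0)) :
    (∀ y z A : ℝ,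
        2 * G ((1/2) * deriv (deriv h) y * z^2 + (1/2) * deriv h y * A)
          ≥ 2 * deriv h y * G ((1/2) * A)) ↔
    ((∀ y : ℝ, deriv (deriv h) y ≥ 0) ∧
      (∀ y A : ℝ, G (deriv h y * A) ≥ deriv h y * G A)) := by
  have hsb : (0:ℝ) ≤ σbar ^ 2 := sq_nonneg _
  have hsu : (0:ℝ) ≤ σund ^ 2 := sq_nonneg _
  -- positive homogeneity
  have Ghom : ∀ c α : ℝ, 0 ≤ c → G (c * α) = c * G α := by
    intro c α hc
    rw [hG, hG]
    have h1' : max (c * α) 0 = c * max α 0 := by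
      rcases le_total α 0 with hα | hα
      · rw [max_eq_right (mul_nonpos_of_nonneg_of_nonpos hc hα), max_eq_right hα, mul_zero]
      · rw [max_eq_left (mul_nonneg hc hα), max_eq_left hα]
    have h2' : max (-(c * α)) 0 = c * max (-α) 0 := by
      rcases le_total α 0 with hα | hα
      · rw [max_eq_left (by nlinarith : (0:ℝ) ≤ -(c*α)), max_eq_left (by linarith : (0:ℝ) ≤ -α)]
        ring
      · rw [max_eq_right (by nlinarith : -(c*α) ≤ 0), max_eq_right (by linarith : -α ≤ 0), mul_zero]
    rw [h1', h2']; ring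
  -- monotonicity: adding a nonneg term increases G
  have Gmono : ∀ u v : ℝ, 0 ≤ u → G (u + v) ≥ G v := by
    intro u v hu
    rw [hG, hG]
    have m1 : max v 0 ≤ max (u + v) 0 := max_le_max (by linarith) le_rfl
    have m2 : max (-(u + v)) 0 ≤ max (-v) 0 := max_le_max (by linarith) le_rfl
    nlinarith [mul_le_mul_of_nonneg_left m1 hsb, mul_le_mul_of_nonneg_left m2 hsu]
  have Gneg : ∀ α : ℝ, α < 0 → G α < 0 := by
    intro α hα
    rw [hG, max_eq_right hα.le, max_eq_left (by linarith : (0:ℝ) ≤ -α)]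
    have : 0 < σund ^ 2 := by positivity
    nlinarith
  have G0 : G 0 = 0 := by rw [hG]; norm_num
  constructor
  · intro H
    constructor
    · intro y
      by_contra hcon
      push_neg at hcon
      have := H y 1 0
      rw [show (1/2) * deriv (deriv h) y * (1:ℝ)^2 + (1/2) * deriv h y * 0
            = (1/2) * deriv (deriv h) y by ring,
        show (1/2) * (0:ℝ) = 0 by norm_num, G0] at this
      have hlt : G ((1/2) * deriv (deriv h) y) < 0 := Gneg _ (by linarith)
      linarith
    · intro y A
      have := H y 0 A
      rw [show (1/2) * deriv (deriv h) y * (0:ℝ)^2 + (1/2) * deriv h y * A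
            = (1/2) * (deriv h y * A) by ring,
        Ghom (1/2) (deriv h y * A) (by norm_num), Ghom (1/2) A (by norm_num)] at this
      linarith
  · rintro ⟨hconv, hsub⟩ y z A
    have hu : (0:ℝ) ≤ (1/2) * deriv (deriv h) y * z ^ 2 := by
      have := hconv y; positivity
    have step1 : G ((1/2) * deriv (deriv h) y * z^2 + (1/2) * deriv h y * A)
        ≥ G ((1/2) * deriv h y * A) := Gmono _ _ hu
    have step2 : G ((1/2) * deriv h y * A) ≥ deriv h y * G ((1/2) * A) := by
      rw [show (1/2) * deriv h y * A = (1/2) * (deriv h y * A) by ring,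
        Ghom (1/2) _ (by norm_num), Ghom (1/2) A (by norm_num)]
      have := hsub y A
      linarith
    linarith
end

section
/- Let $g, f$ be generators and $G$ a sublinear monotone function as in the G-BSDE framework, and suppose $h_1, h_2 \in C^2(\mathbb{R})$ both satisfy the G-convexity pointwise condition: $g(t,h(y),h'(y)z) + 2G(f(t,h(y),h'(y)z) + \tfrac{1}{2}h''(y)z^2 + \tfrac{1}{2}h'(y)A) \ge h'(y)g(t,y,z) + 2h'(y)G(f(t,y,z) + \tfrac{1}{2}A)$ for all $t, y, z, A$. If $h_1$ is nondecreasing ($h_1' \ge 0$), then the composition $h_1 \circ h_2$ also satisfies the G-convexity pointwise condition. -/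
/-- The pointwise G-convexity condition from Theorem 3: for all `t, y, z, A`,
`g(t,h(y),h'(y)z) + 2G(f(t,h(y),h'(y)z) + ½h''(y)z² + ½h'(y)A)
  ≥ h'(y)g(t,y,z) + 2h'(y)G(f(t,y,z) + ½A)`. -/
def GConvexCond (g f : ℝ → ℝ → ℝ → ℝ) (G : ℝ → ℝ) (h : ℝ → ℝ) : Prop :=
  ∀ t y z A : ℝ,
    g t (h y) (deriv h y * z)
      + 2 * G (f t (h y) (deriv h y * z)
          + (1/2) * deriv (deriv h) y * z^2 + (1/2) * deriv h y * A)
      ≥ deriv h y * g t y z + 2 * deriv h y * G (f t y z + (1/2) * A)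

/-- If `h₁, h₂` satisfy the G-convexity pointwise condition and `h₁' ≥ 0`,
then so does the composition `h₁ ∘ h₂`. -/
theorem GConvexCond_comp
    (g f : ℝ → ℝ → ℝ → ℝ) (G : ℝ → ℝ)
    (hsubadd : ∀ x y : ℝ, G (x + y) ≤ G x + G y)
    (hpos : ∀ (l : ℝ), 0 ≤ l → ∀ x, G (l * x) = l * G x)
    (hmono : Monotone G)
    (h₁ h₂ : ℝ → ℝ) (hh₁ : ContDiff ℝ 2 h₁) (hh₂ : ContDiff ℝ 2 h₂)
    (hc₁ : GConvexCond g f G h₁) (hc₂ : GConvexCond g f G h₂)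
    (hmono₁ : ∀ y : ℝ, deriv h₁ y ≥ 0) :
    GConvexCond g f G (h₁ ∘ h₂) := by
  have h1' := (contDiff_succ_iff_deriv.mp (by exact_mod_cast hh₁ : ContDiff ℝ (1+1) h₁))
  have h2' := (contDiff_succ_iff_deriv.mp (by exact_mod_cast hh₂ : ContDiff ℝ (1+1) h₂))
  have d1 : Differentiable ℝ h₁ := h1'.1
  have d2 : Differentiable ℝ h₂ := h2'.1
  have dd1 : Differentiable ℝ (deriv h₁) := h1'.2.2.differentiable one_ne_zero
  have dd2 : Differentiable ℝ (deriv h₂) := h2'.2.2.differentiable one_ne_zero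
  have key : deriv (h₁ ∘ h₂) = fun y => deriv h₁ (h₂ y) * deriv h₂ y := by
    funext y
    exact deriv_comp y (d1 _) (d2 _)
  have key2 : ∀ y, deriv (deriv (h₁ ∘ h₂)) y
      = deriv (deriv h₁) (h₂ y) * (deriv h₂ y)^2 + deriv h₁ (h₂ y) * deriv (deriv h₂) y := by
    intro y
    rw [key]
    have hd : HasDerivAt (fun x => deriv h₁ (h₂ x) * deriv h₂ x)
        ((deriv (deriv h₁) (h₂ y) * deriv h₂ y) * deriv h₂ y
          + deriv h₁ (h₂ y) * deriv (deriv h₂) y) y :=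
      (((dd1 (h₂ y)).hasDerivAt.comp y (d2 y).hasDerivAt)).mul (dd2 y).hasDerivAt
    rw [hd.deriv]; ring
  intro t y z A
  have e1 := hc₁ t (h₂ y) (deriv h₂ y * z) (deriv (deriv h₂) y * z^2 + deriv h₂ y * A)
  have e2 := hc₂ t y z A
  have a0 := hmono₁ (h₂ y)
  simp only [Function.comp_apply, key2]
  simp only [key]
  have harg : f t (h₁ (h₂ y)) (deriv h₁ (h₂ y) * deriv h₂ y * z)
      + 1 / 2 * (deriv (deriv h₁) (h₂ y) * (deriv h₂ y)^2 + deriv h₁ (h₂ y) * deriv (deriv h₂) y) * z^2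
      + 1 / 2 * (deriv h₁ (h₂ y) * deriv h₂ y) * A
      = f t (h₁ (h₂ y)) (deriv h₁ (h₂ y) * (deriv h₂ y * z))
      + 1 / 2 * deriv (deriv h₁) (h₂ y) * (deriv h₂ y * z)^2
      + 1 / 2 * deriv h₁ (h₂ y) * (deriv (deriv h₂) y * z^2 + deriv h₂ y * A) := by ring
  have harg2 : deriv h₁ (h₂ y) * deriv h₂ y * z = deriv h₁ (h₂ y) * (deriv h₂ y * z) := by ring
  have harg3 : f t (h₂ y) (deriv h₂ y * z) + 1 / 2 * (deriv (deriv h₂) y * z ^ 2 + deriv h₂ y * A)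
      = f t (h₂ y) (deriv h₂ y * z) + 1 / 2 * deriv (deriv h₂) y * z ^ 2 + 1 / 2 * deriv h₂ y * A := by
    ring
  rw [harg3] at e1
  rw [harg, harg2]
  nlinarith [mul_le_mul_of_nonneg_left e2 a0]
end
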